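/- arXiv:2206.12204 — 3 statements merged into one kernel-verified Lean document; each statement's English description precedes it below -/
import Mathlib

section
/- Suppose two items d and d' are each always displayed in the same single display context x₀, and a counterfactual estimator given by a transformation function f depending only on (click, context) is unbiased for both items' relevances R_d and R_{d'}, with f(1,x₀) ≠ f(0,x₀). Then the affine parameters α = 1/(f(1,x₀)−f(0,x₀)) and β = −f(0,x₀)/(f(1,x₀)−f(0,x₀)) are identical for both items, and hence P(C=1|d,x₀) − P(C=1|d',x₀) = α·(R_d − R_{d'}). -/
/-- Two items `d, d'` always displayed in the same single display context
`x₀`, with the same transformation function `f` (which depends only on the click and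
the display context, not on relevance). If the estimator is unbiased for both items'
relevances `R_d` and `R_d'`, with `f(1,x₀) ≠ f(0,x₀)`, then the affine parameters
`α = 1/(f(1,x₀)−f(0,x₀))` and `β = −f(0,x₀)/(f(1,x₀)−f(0,x₀))` are identical for both
items, and hence `P(C=1|d,x₀) − P(C=1|d',x₀) = α·(R_d − R_d')`. -/
theorem same_context_same_affine_params
    {X : Type*} (f : Bool → X → ℝ) (x₀ : X)
    (p p' : ℝ) (hp : p ∈ Set.Icc (0 : ℝ) 1) (hp' : p' ∈ Set.Icc (0 : ℝ) 1)
    (Rd Rd' : ℝ) (hRd : Rd ∈ Set.Icc (0 : ℝ) 1) (hRd' : Rd' ∈ Set.Icc (0 : ℝ) 1)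
    (hne : f true x₀ ≠ f false x₀)
    -- unbiasedness for item d
    (hunb : p * f true x₀ + (1 - p) * f false x₀ = Rd)
    -- unbiasedness for item d'
    (hunb' : p' * f true x₀ + (1 - p') * f false x₀ = Rd')
    (α β α' β' : ℝ)
    (hα : α = (f true x₀ - f false x₀)⁻¹)
    (hβ : β = -(f false x₀) * (f true x₀ - f false x₀)⁻¹)
    (hα' : α' = (f true x₀ - f false x₀)⁻¹)
    (hβ' : β' = -(f false x₀) * (f true x₀ - f false x₀)⁻¹) :
    α = α' ∧ β = β' ∧ p - p' = α * (Rd - Rd') := by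
  have hd : f true x₀ - f false x₀ ≠ 0 := sub_ne_zero.mpr hne
  refine ⟨hα.trans hα'.symm, hβ.trans hβ'.symm, ?_⟩
  subst hα
  field_simp
  nlinarith [hunb, hunb']
end

section
/- Under the Pairwise Debiasing assumption—there exist constants t⁺_k > 0 and t⁻_k > 0 such that P(C=1|d,k,q) = t⁺_k·R_{d|q} and P(C=0|d,k,q) = t⁻_k·(1 − R_{d|q}) for all items displayed at position k—if two items d₁, d₂ (possibly in different queries) are displayed at the same position k with R_{d₁|q₁} ≠ R_{d₂|q₂}, then t⁺_k = 1 and t⁻_k = 1, so the click probability at position k equals the relevance: P(C=1|d,k,q) = R_{d|q}. -/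
/-- Pairwise Debiasing assumption: at position `k` there are ratios
`t⁺_k, t⁻_k > 0` with `P(C=1|d,k,q) = t⁺_k·R_{d|q}` and `P(C=0|d,k,q) = t⁻_k·(1 − R_{d|q})`,
which must sum to one for every item displayed at `k`. If two items `d₁, d₂` with
different relevances `R₁ ≠ R₂` are displayed at position `k`, then `t⁺_k = 1` and
`t⁻_k = 1`, so the click probability at `k` equals the relevance:
`P(C=1|d,k,q) = t⁺_k·R_{d|q} = R_{d|q}` for every item displayed at `k`. -/
theorem pairwise_debiasing_trivially_unbiased
    (tp tm : ℝ) (htp : 0 < tp) (htm : 0 < tm)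
    (R₁ R₂ : ℝ) (hR₁ : R₁ ∈ Set.Icc (0 : ℝ) 1) (hR₂ : R₂ ∈ Set.Icc (0 : ℝ) 1)
    (hne : R₁ ≠ R₂)
    -- click and non-click probabilities sum to one for both items
    (h₁ : tp * R₁ + tm * (1 - R₁) = 1)
    (h₂ : tp * R₂ + tm * (1 - R₂) = 1) :
    tp = 1 ∧ tm = 1 ∧ ∀ R : ℝ, tp * R = R ∧ tm * (1 - R) = 1 - R := by
  have hsub : R₁ - R₂ ≠ 0 := sub_ne_zero.mpr hne
  have heq : tp = tm := by
    have h := sub_eq_zero.mpr (h₁.trans h₂.symm)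
    have : (tp - tm) * (R₁ - R₂) = 0 := by ring_nf; ring_nf at h; linarith
    rcases mul_eq_zero.mp this with h' | h'
    · linarith [sub_eq_zero.mp h']
    · exact absurd h' hsub
  have htp1 : tp = 1 := by
    subst heq; nlinarith
  have htm1 : tm = 1 := heq ▸ htp1
  refine ⟨htp1, htm1, fun R => ?_⟩
  rw [htp1, htm1]; constructor <;> ring
end

section
/- If for each position k in the support of the logging distribution, clicks satisfy the affine model P(C=1|k) = α_k·R + β_k with α_k ≥ τ for a clipping threshold τ > 0, then the clipped estimator R̂ = (1/N) Σ_i (c_i − β_{k_i})/max(α_{k_i}, τ) coincides with the unclipped estimator and is unbiased; conversely if some position k with positive probability has α_k < τ and α_k·R + β_k ≠ β_k (i.e., α_k·R ≠ 0), then the clipped estimator is biased with bias E_k[ 1{α_k < τ}·(α_k/τ − 1)·R ]. -/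
open MeasureTheory

/-- Affine click model with true parameters `α_k ∈ (0,1]`, `β_k`;
positions drawn from the logging distribution `ν`; clicks Bernoulli(`α_k·R + β_k`).
The clipped estimator replaces `α_k` by `max(α_k, τ)`; its per-sample expectation is
`E_k[((α_k·R + β_k) − β_k)/max(α_k, τ)]`.
(i) If `α_k ≥ τ` for every position, the clipped estimator coincides with the
unclipped one and is unbiased.
(ii) In general its bias equals `E_k[1{α_k < τ}·(α_k/τ − 1)·R]`.
(iii) If positions with `α_k < τ` and `α_k·R ≠ 0` have positive probability, the
clipped estimator is biased. -/
theorem clipped_affine_estimator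
    {K : Type*} [MeasurableSpace K] (ν : Measure K) [IsProbabilityMeasure ν]
    (α β : K → ℝ) (hα : ∀ k, 0 < α k) (hα1 : ∀ k, α k ≤ 1) (hαm : Measurable α)
    (τ : ℝ) (hτ : 0 < τ)
    (R : ℝ) (hR : R ∈ Set.Icc (0 : ℝ) 1)
    (hint : Integrable (fun k => ((α k * R + β k) - β k) / max (α k) τ) ν)
    (hint' : Integrable (fun k => if α k < τ then (α k / τ - 1) * R else 0) ν) :
    ((∀ k, τ ≤ α k) →
        (∀ k, ((α k * R + β k) - β k) / max (α k) τ = ((α k * R + β k) - β k) / α k)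
          ∧ ∫ k, ((α k * R + β k) - β k) / max (α k) τ ∂ν = R)
      ∧ ((∫ k, ((α k * R + β k) - β k) / max (α k) τ ∂ν) - R
          = ∫ k, (if α k < τ then (α k / τ - 1) * R else 0) ∂ν)
      ∧ (ν {k | α k < τ ∧ α k * R ≠ 0} ≠ 0 →
          ∫ k, ((α k * R + β k) - β k) / max (α k) τ ∂ν ≠ R) := by
  have key : ∀ k, ((α k * R + β k) - β k) / max (α k) τ - R
      = (if α k < τ then (α k / τ - 1) * R else 0) := by
    intro k
    have hk := (hα k).ne'
    by_cases h : α k < τ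
    · rw [if_pos h, max_eq_right h.le]
      field_simp
      ring
    · rw [if_neg h, max_eq_left (not_lt.1 h)]
      field_simp
      ring
  have bias : (∫ k, ((α k * R + β k) - β k) / max (α k) τ ∂ν) - R
      = ∫ k, (if α k < τ then (α k / τ - 1) * R else 0) ∂ν := by
    rw [← integral_congr_ae (Filter.Eventually.of_forall key),
      integral_sub hint (integrable_const R), integral_const]
    simp
  refine ⟨fun h => ⟨fun k => by rw [max_eq_left (h k)], ?_⟩, bias, fun hpos => ?_⟩
  · have : ∀ k, ((α k * R + β k) - β k) / max (α k) τ = R := by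
      intro k
      have := key k
      rw [if_neg (not_lt.2 (h k))] at this
      linarith
    rw [integral_congr_ae (Filter.Eventually.of_forall this), integral_const]
    simp
  · intro heq
    rw [heq, sub_self] at bias
    set g : K → ℝ := fun k => if α k < τ then (α k / τ - 1) * R else 0 with hg
    have hnn : (0 : K → ℝ) ≤ fun k => -g k := by
      intro k
      simp only [Pi.zero_apply]
      by_cases h : α k < τ
      · have h1 : α k / τ ≤ 1 := (div_le_one hτ).2 h.le
        simp only [hg, if_pos h]
        nlinarith [hR.1]
      · simp [hg, if_neg h]
    have hsub : {k | α k < τ ∧ α k * R ≠ 0} ⊆ Function.support (fun k => -g k) := by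
      intro k ⟨h1, h2⟩
      have hR0 : R ≠ 0 := fun h => h2 (by simp [h])
      have hne : α k / τ - 1 ≠ 0 := by
        have : α k / τ < 1 := (div_lt_one hτ).2 h1
        linarith
      simp only [Function.mem_support, hg, if_pos h1, neg_ne_zero]
      exact mul_ne_zero hne hR0
    have hpos' : 0 < ν (Function.support fun k => -g k) :=
      lt_of_lt_of_le (pos_iff_ne_zero.2 hpos) (measure_mono hsub)
    have hlt := (integral_pos_iff_support_of_nonneg hnn hint'.neg).2 hpos'
    rw [integral_neg] at hlt
    linarith [bias.symm]
end
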